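/- Let F be a finite field, l a natural number, and g a function from the Boolean cube {0,1}^l to F that is not identically zero. Then the number of points t = (t_1,…,t_l) ∈ F^l satisfying Σ_{w ∈ {0,1}^l} g(w) · Π_{i : w_i = 1} t_i = 0 is at most l·|F|^{l−1}. -/

import Mathlib

set_option linter.unusedSectionVars false

noncomputable section SumProdAux

variable {F : Type*} [Field F] [Fintype F]

/-- The multilinear sum in the `if`-form. -/
private def mlSum (l : ℕ) (g : (Fin l → Bool) → F) (t : Fin l → F) : F :=
  ∑ w : Fin l → Bool, g w * ∏ i, (if w i = true then t i else 1)

set_option linter.unusedSectionVars false in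
private lemma mlSum_cons (l : ℕ) (g : (Fin (l + 1) → Bool) → F) (s : F) (t : Fin l → F) :
    mlSum (l + 1) g (Fin.cons s t) =
      mlSum l (fun w => g (Fin.cons false w)) t +
        s * mlSum l (fun w => g (Fin.cons true w)) t := by
  unfold mlSum
  rw [← Equiv.sum_comp (Fin.consEquiv fun _ => Bool)]
  rw [Fintype.sum_prod_type]
  simp only [Fin.consEquiv_apply]
  rw [Fintype.sum_bool]
  simp only [Fin.prod_univ_succ, Fin.cons_zero, Fin.cons_succ, if_true, if_false,
    Finset.mul_sum, one_mul]
  rw [add_comm]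
  simp [Fin.consEquiv, mul_left_comm, mul_comm, mul_assoc]

private lemma card_affine_root_le_one (a b : F) (hb : b ≠ 0) :
    Nat.card {s : F // a + s * b = 0} ≤ 1 := by
  classical
  rw [Nat.card_eq_fintype_card, Fintype.card_le_one_iff_subsingleton]
  constructor
  rintro ⟨s, hs⟩ ⟨s', hs'⟩
  ext
  have : s * b = s' * b := by
    have h1 : s * b = -a := by linear_combination hs
    have h2 : s' * b = -a := by linear_combination hs'
    rw [h1, h2]
  exact mul_right_cancel₀ hb this

private lemma card_affine_root_zero (a : F) (ha : a ≠ 0) :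
    Nat.card {s : F // a + s * 0 = 0} = 0 := by
  have : IsEmpty {s : F // a + s * 0 = 0} := by
    constructor
    rintro ⟨s, hs⟩
    simp at hs
    exact ha hs
  exact Nat.card_of_isEmpty

private lemma card_subtype_le' (p : F → Prop) :
    Nat.card {s : F // p s} ≤ Fintype.card F := by
  classical
  rw [Nat.card_eq_fintype_card]
  exact Fintype.card_subtype_le _

private lemma card_mlSum_zero_le :
    ∀ (l : ℕ) (g : (Fin l → Bool) → F), g ≠ 0 →
      Nat.card {t : Fin l → F // mlSum l g t = 0} ≤ l * Fintype.card F ^ (l - 1) := by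
  intro l
  induction l with
  | zero =>
    intro g hg
    have hne : ∀ t, mlSum 0 g t ≠ 0 := by
      intro t
      have h : mlSum 0 g t = g (fun i => i.elim0) := by
        simp only [mlSum]
        rw [Finset.sum_eq_single_of_mem (fun i => i.elim0) (Finset.mem_univ _)]
        · simp
        · intro w _ hw
          exact absurd (Subsingleton.elim w _) hw
      rw [h]
      intro h0
      apply hg
      funext w
      rw [Subsingleton.elim w (fun i => i.elim0)]
      exact h0
    have : IsEmpty {t : Fin 0 → F // mlSum 0 g t = 0} :=
      ⟨fun ⟨t, ht⟩ => hne t ht⟩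
    simp
  | succ l IH =>
    intro g hg
    classical
    set q := Fintype.card F with hq
    set A : (Fin l → F) → F := fun t => mlSum l (fun w => g (Fin.cons false w)) t with hA
    set B : (Fin l → F) → F := fun t => mlSum l (fun w => g (Fin.cons true w)) t with hB
    -- rewrite the count as a sum over fibers
    have key : Nat.card {t : Fin (l + 1) → F // mlSum (l + 1) g t = 0} =
        ∑ t' : Fin l → F, Nat.card {s : F // A t' + s * B t' = 0} := by
      have e1 : {t : Fin (l + 1) → F // mlSum (l + 1) g t = 0} ≃
          {p : (Fin l → F) × F // A p.1 + p.2 * B p.1 = 0} := by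
        refine Equiv.subtypeEquiv
          ((Fin.consEquiv fun _ => F).symm.trans (Equiv.prodComm _ _)) ?_
        intro t
        have ht : t = Fin.cons (t 0) (Fin.tail t) := (Fin.cons_self_tail t).symm
        conv_lhs => rw [ht]
        rw [mlSum_cons]
        simp [Fin.consEquiv, Fin.tail]
        exact Iff.rfl
      have e2 : {p : (Fin l → F) × F // A p.1 + p.2 * B p.1 = 0} ≃
          Σ t' : Fin l → F, {s : F // A t' + s * B t' = 0} :=
        Equiv.subtypeProdEquivSigmaSubtype (fun t' s => A t' + s * B t' = 0)
      rw [Nat.card_congr (e1.trans e2), Nat.card_eq_fintype_card, Fintype.card_sigma]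
      congr 1
      funext t'
      rw [Nat.card_eq_fintype_card]
    rw [key]
    by_cases h1 : (fun w => g (Fin.cons true w)) = (0 : (Fin l → Bool) → F)
    · -- B is identically zero; A comes from a nonzero g₀
      have h0 : (fun w => g (Fin.cons false w)) ≠ (0 : (Fin l → Bool) → F) := by
        intro h0
        apply hg
        funext w
        rw [← Fin.cons_self_tail w]
        cases hw : w 0
        · exact congrFun h0 (Fin.tail w)
        · exact congrFun h1 (Fin.tail w)
      have hBz : ∀ t', B t' = 0 := by
        intro t'
        simp only [hB, mlSum]
        refine Finset.sum_eq_zero fun w _ => ?_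
        rw [show g (Fin.cons true w) = 0 from congrFun h1 w, zero_mul]
      have hbound : ∀ t', Nat.card {s : F // A t' + s * B t' = 0} ≤
          if A t' = 0 then q else 0 := by
        intro t'
        by_cases hA0 : A t' = 0
        · rw [if_pos hA0]; exact card_subtype_le' _
        · rw [if_neg hA0, hBz t']
          exact le_of_eq (card_affine_root_zero (A t') hA0)
      calc ∑ t' : Fin l → F, Nat.card {s : F // A t' + s * B t' = 0}
          ≤ ∑ t' : Fin l → F, (if A t' = 0 then q else 0) :=
            Finset.sum_le_sum fun t' _ => hbound t'
        _ = (Finset.univ.filter fun t' => A t' = 0).card * q := by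
            rw [Finset.sum_ite, Finset.sum_const, Finset.sum_const]
            simp [mul_comm]
        _ ≤ l * q ^ (l - 1) * q := by
            have := IH (fun w => g (Fin.cons false w)) h0
            rw [Nat.card_eq_fintype_card, Fintype.card_subtype] at this
            exact Nat.mul_le_mul_right q this
        _ ≤ (l + 1) * q ^ (l + 1 - 1) := by
            rcases Nat.eq_zero_or_pos l with hl | hl
            · simp [hl]
            · have : q ^ (l - 1) * q = q ^ l := by
                rw [← pow_succ]
                congr 1
                omega
              rw [mul_assoc, this]
              simp only [Nat.add_sub_cancel]
              exact Nat.mul_le_mul_right _ (by omega)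
    · -- B comes from a nonzero g₁
      have hbound : ∀ t', Nat.card {s : F // A t' + s * B t' = 0} ≤
          if B t' = 0 then q else 1 := by
        intro t'
        by_cases hB0 : B t' = 0
        · rw [if_pos hB0]; exact card_subtype_le' _
        · rw [if_neg hB0]; exact card_affine_root_le_one (A t') (B t') hB0
      calc ∑ t' : Fin l → F, Nat.card {s : F // A t' + s * B t' = 0}
          ≤ ∑ t' : Fin l → F, (if B t' = 0 then q else 1) :=
            Finset.sum_le_sum fun t' _ => hbound t'
        _ = (Finset.univ.filter fun t' => B t' = 0).card * q +
            (Finset.univ.filter fun t' => ¬ B t' = 0).card * 1 := by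
            rw [Finset.sum_ite, Finset.sum_const, Finset.sum_const]
            simp [mul_comm]
        _ ≤ l * q ^ (l - 1) * q + q ^ l := by
            have h1' := IH (fun w => g (Fin.cons true w)) h1
            rw [Nat.card_eq_fintype_card, Fintype.card_subtype] at h1'
            have hc : (Finset.univ.filter fun t' => ¬ B t' = 0).card * 1 ≤ q ^ l := by
              rw [mul_one]
              calc (Finset.univ.filter fun t' => ¬ B t' = 0).card
                  ≤ (Finset.univ : Finset (Fin l → F)).card := Finset.card_filter_le _ _
                _ = q ^ l := by simp [Finset.card_univ, hq]
            exact Nat.add_le_add (Nat.mul_le_mul_right q h1') hc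
        _ ≤ (l + 1) * q ^ (l + 1 - 1) := by
            simp only [Nat.add_sub_cancel]
            have h2 : l * q ^ (l - 1) * q ≤ l * q ^ l := by
              rcases Nat.eq_zero_or_pos l with hl | hl
              · simp [hl]
              · rw [mul_assoc, ← pow_succ]
                have : l - 1 + 1 = l := by omega
                rw [this]
            calc l * q ^ (l - 1) * q + q ^ l ≤ l * q ^ l + q ^ l :=
                  Nat.add_le_add_right h2 _
              _ = (l + 1) * q ^ l := by ring

end SumProdAux

/-- If `g : {0,1}^l → F` is not identically zero, then the number of points `t ∈ F^l` with
`Σ_{w ∈ {0,1}^l} g(w) · Π_{i : w_i = 1} t_i = 0` is at most `l·|F|^{l−1}`. -/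
theorem sum_prod_zeros_card_le (F : Type*) [Field F] [Fintype F] (l : ℕ)
    (g : (Fin l → Bool) → F) (hg : g ≠ 0) :
    Nat.card {t : Fin l → F //
        ∑ w : Fin l → Bool, g w * ∏ i ∈ Finset.univ.filter (fun i => w i = true), t i = 0}
      ≤ l * Fintype.card F ^ (l - 1) := by
  classical
  have hrw : ∀ t : Fin l → F,
      (∑ w : Fin l → Bool, g w * ∏ i ∈ Finset.univ.filter (fun i => w i = true), t i) =
        mlSum l g t := by
    intro t
    unfold mlSum
    congr 1
    funext w
    congr 1
    rw [Finset.prod_filter]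
  simp only [hrw]
  exact card_mlSum_zero_le l g hg
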